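/- If G is a connected graph, then diam(G) ≤ diam(T(G)) ≤ diam(G) + 1, where T(G) is the total graph of G. -/

import Mathlib

open Finset

/-- Total transformation graph `G^{xyz}` on vertex set `V(G) ∪ E(G)`. -/
def transGraph {V : Type*} (G : SimpleGraph V) (x y z : Bool) :
    SimpleGraph (V ⊕ G.edgeSet) where
  Adj a b :=
    match a, b with
    | Sum.inl u, Sum.inl v =>
        if x then G.Adj u v else (u ≠ v ∧ ¬ G.Adj u v)
    | Sum.inl v, Sum.inr e =>
        if z then v ∈ (e : Sym2 V) else v ∉ (e : Sym2 V)
    | Sum.inr e, Sum.inl v =>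
        if z then v ∈ (e : Sym2 V) else v ∉ (e : Sym2 V)
    | Sum.inr e, Sum.inr f =>
        if y then (e ≠ f ∧ ∃ v, v ∈ (e : Sym2 V) ∧ v ∈ (f : Sym2 V))
        else (e ≠ f ∧ ¬ ∃ v, v ∈ (e : Sym2 V) ∧ v ∈ (f : Sym2 V))
  symm := by
    constructor
    rintro (u | e) (v | f) h
    · cases x with
      | true => simpa using (by simpa using h : G.Adj u v).symm
      | false =>
        simp only [Bool.false_eq_true, if_false] at h ⊢
        exact ⟨h.1.symm, fun hc => h.2 hc.symm⟩
    · cases z <;> simpa using h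
    · cases z <;> simpa using h
    · cases y with
      | true =>
        simp only [if_pos rfl] at h ⊢
        exact ⟨h.1.symm, h.2.imp fun v hv => ⟨hv.2, hv.1⟩⟩
      | false =>
        simp only [Bool.false_eq_true, if_false] at h ⊢
        exact ⟨h.1.symm, fun ⟨v, hv⟩ => h.2 ⟨v, hv.2, hv.1⟩⟩
  loopless := by
    constructor
    rintro (u | e) h
    · cases x with
      | true => exact G.loopless.irrefl u (by simpa using h)
      | false => simp at h
    · cases y <;> simp at h

/-- The total graph `T(G) = G^{+++}`. -/
def totalGraph {V : Type*} (G : SimpleGraph V) : SimpleGraph (V ⊕ G.edgeSet) :=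
  transGraph G true true true

/-- Eccentricity of a vertex in a graph on a finite vertex type. -/
noncomputable def ecc {V : Type*} [Fintype V] (G : SimpleGraph V) (u : V) : ℕ :=
  Finset.univ.sup (G.dist u)


section TotalGraphAux

variable {V : Type*} {G : SimpleGraph V}

lemma tg_adj_inl_inl {u v : V} :
    (totalGraph G).Adj (Sum.inl u) (Sum.inl v) ↔ G.Adj u v := Iff.rfl

lemma tg_adj_inl_inr {v : V} {e : G.edgeSet} :
    (totalGraph G).Adj (Sum.inl v) (Sum.inr e) ↔ v ∈ (e : Sym2 V) := Iff.rfl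

lemma tg_adj_inr_inl {v : V} {e : G.edgeSet} :
    (totalGraph G).Adj (Sum.inr e) (Sum.inl v) ↔ v ∈ (e : Sym2 V) := Iff.rfl

lemma tg_adj_inr_inr {e f : G.edgeSet} :
    (totalGraph G).Adj (Sum.inr e) (Sum.inr f) ↔
      e ≠ f ∧ ∃ v, v ∈ (e : Sym2 V) ∧ v ∈ (f : Sym2 V) := Iff.rfl

lemma tg_eq_or_adj (e : G.edgeSet) {a b : V} (ha : a ∈ (e : Sym2 V))
    (hb : b ∈ (e : Sym2 V)) : a = b ∨ G.Adj a b := by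
  obtain ⟨e, he⟩ := e
  induction e using Sym2.ind with
  | _ x y =>
    rw [SimpleGraph.mem_edgeSet] at he
    rcases Sym2.mem_iff.mp ha with rfl | rfl <;> rcases Sym2.mem_iff.mp hb with rfl | rfl
    · exact Or.inl rfl
    · exact Or.inr he
    · exact Or.inr he.symm
    · exact Or.inl rfl

/-- If `a, b` are both endpoints of an edge `e`, then `d_G(a,b) ≤ 1`. -/
lemma tg_edist_le_one (e : G.edgeSet) {a b : V} (ha : a ∈ (e : Sym2 V))
    (hb : b ∈ (e : Sym2 V)) : G.edist a b ≤ 1 := by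
  rcases tg_eq_or_adj e ha hb with rfl | h
  · simp [SimpleGraph.edist_self]
  · exact le_of_eq (SimpleGraph.edist_eq_one_iff_adj.mpr h)

/-- The inclusion of `G` into its total graph as a graph homomorphism. -/
def tgInlHom (G : SimpleGraph V) : G →g totalGraph G :=
  ⟨Sum.inl, fun h => tg_adj_inl_inl.mpr h⟩

/-- Distances in the total graph between original vertices are at most those in `G`. -/
lemma tg_edist_inl_le (u v : V) :
    (totalGraph G).edist (Sum.inl u) (Sum.inl v) ≤ G.edist u v := by
  by_cases hr : G.Reachable u v
  · obtain ⟨p, hp⟩ := hr.exists_walk_length_eq_edist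
    calc (totalGraph G).edist (Sum.inl u) (Sum.inl v)
        ≤ (p.map (tgInlHom G)).length := SimpleGraph.edist_le _
      _ = G.edist u v := by rw [SimpleGraph.Walk.length_map, hp]
  · rw [SimpleGraph.edist_eq_top_of_not_reachable hr]; exact le_top

/-- "Representative" relation: `w` is a vertex of `G` underlying the total-graph vertex `x`. -/
def tgRep : V ⊕ G.edgeSet → V → Prop
  | Sum.inl a, w => w = a
  | Sum.inr e, w => w ∈ (e : Sym2 V)

/-- Projection of total-graph walks: a walk from `x` to `y` yields representatives
at `G`-distance at most the length of the walk. -/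
lemma tg_proj {x y : V ⊕ G.edgeSet} (p : (totalGraph G).Walk x y) :
    ∃ w w', tgRep x w ∧ tgRep y w' ∧ G.edist w w' ≤ p.length := by
  induction p with
  | @nil x =>
    match x with
    | Sum.inl a => exact ⟨a, a, rfl, rfl, by simp [SimpleGraph.edist_self]⟩
    | Sum.inr e => exact ⟨(e : Sym2 V).out.1, (e : Sym2 V).out.1,
        Sym2.out_fst_mem _, Sym2.out_fst_mem _, by simp [SimpleGraph.edist_self]⟩
  | @cons x y _ h p ih =>
    obtain ⟨w', w'', hw', hw'', hle⟩ := ih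
    match x, y, h, hw' with
    | Sum.inl a, Sum.inl b, h, hw' =>
      subst hw'
      refine ⟨a, w'', rfl, hw'', ?_⟩
      calc G.edist a w'' ≤ G.edist a w' + G.edist w' w'' := SimpleGraph.edist_triangle
        _ ≤ 1 + p.length := by
            gcongr
            exact le_of_eq (SimpleGraph.edist_eq_one_iff_adj.mpr (tg_adj_inl_inl.mp h))
        _ = (p.length + 1 : ℕ) := by push_cast; ring
    | Sum.inl a, Sum.inr e, h, hw' =>
      refine ⟨a, w'', rfl, hw'', ?_⟩
      calc G.edist a w'' ≤ G.edist a w' + G.edist w' w'' := SimpleGraph.edist_triangle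
        _ ≤ 1 + p.length := by
            gcongr
            exact tg_edist_le_one e (tg_adj_inl_inr.mp h) hw'
        _ = (p.length + 1 : ℕ) := by push_cast; ring
    | Sum.inr e, Sum.inl b, h, hw' =>
      subst hw'
      refine ⟨w', w'', tg_adj_inr_inl.mp h, hw'', hle.trans ?_⟩
      exact_mod_cast Nat.cast_le.mpr (Nat.le_succ _)
    | Sum.inr e, Sum.inr f, h, hw' =>
      obtain ⟨-, s, hse, hsf⟩ := tg_adj_inr_inr.mp h
      refine ⟨s, w'', hse, hw'', ?_⟩
      calc G.edist s w'' ≤ G.edist s w' + G.edist w' w'' := SimpleGraph.edist_triangle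
        _ ≤ 1 + p.length := by
            gcongr
            exact tg_edist_le_one f hsf hw'
        _ = (p.length + 1 : ℕ) := by push_cast; ring

/-- The total graph of a connected graph is connected. -/
lemma tg_connected (hG : G.Connected) : (totalGraph G).Connected := by
  have hV : Nonempty V := hG.nonempty
  have key : ∀ x : V ⊕ G.edgeSet, ∃ a : V, (totalGraph G).Reachable x (Sum.inl a) := by
    rintro (a | e)
    · exact ⟨a, SimpleGraph.Reachable.refl _⟩
    · exact ⟨(e : Sym2 V).out.1,
        SimpleGraph.Adj.reachable (tg_adj_inr_inl.mpr (Sym2.out_fst_mem (e : Sym2 V)))⟩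
  constructor
  intro x y
  obtain ⟨a, hxa⟩ := key x
  obtain ⟨b, hyb⟩ := key y
  exact hxa.trans (((hG a b).map (tgInlHom G)).trans hyb.symm)

/-- Distances in `G` are at most those in the total graph. -/
lemma tg_le_edist_inl (hG : G.Connected) (u v : V) :
    G.edist u v ≤ (totalGraph G).edist (Sum.inl u) (Sum.inl v) := by
  obtain ⟨p, hp⟩ := ((tg_connected hG) (Sum.inl u) (Sum.inl v)).exists_walk_length_eq_edist
  obtain ⟨w, w', hw, hw', hle⟩ := tg_proj p
  rcases hw with rfl
  rcases hw' with rfl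
  exact hle.trans (le_of_eq hp)

/-- Edge-edge distance bound in the total graph. -/
lemma tg_edist_inr_inr {a c : V} (p : G.Walk a c) (f : G.edgeSet) :
    ∀ e : G.edgeSet, a ∈ (e : Sym2 V) → c ∈ (f : Sym2 V) →
      (totalGraph G).edist (Sum.inr e) (Sum.inr f) ≤ p.length + 1 := by
  induction p with
  | nil =>
    intro e ha hc
    by_cases hef : e = f
    · subst hef; simp [SimpleGraph.edist_self]
    · simpa using le_of_eq
        (SimpleGraph.edist_eq_one_iff_adj.mpr (tg_adj_inr_inr.mpr ⟨hef, _, ha, hc⟩))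
  | @cons a b _ h q ih =>
    intro e ha hc
    set e' : G.edgeSet := ⟨s(a, b), h⟩ with he'
    have hae' : a ∈ (e' : Sym2 V) := by simp [he']
    have hbe' : b ∈ (e' : Sym2 V) := by simp [he']
    have h1 : (totalGraph G).edist (Sum.inr e) (Sum.inr e') ≤ 1 := by
      by_cases hee : e = e'
      · subst hee; simp [SimpleGraph.edist_self]
      · exact le_of_eq
          (SimpleGraph.edist_eq_one_iff_adj.mpr (tg_adj_inr_inr.mpr ⟨hee, a, ha, hae'⟩))
    calc (totalGraph G).edist (Sum.inr e) (Sum.inr f)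
        ≤ (totalGraph G).edist (Sum.inr e) (Sum.inr e')
          + (totalGraph G).edist (Sum.inr e') (Sum.inr f) := SimpleGraph.edist_triangle
      _ ≤ 1 + (q.length + 1) := by gcongr; exact ih e' hbe' hc
      _ = ((SimpleGraph.Walk.cons h q).length + 1 : ℕ) := by
          simp [SimpleGraph.Walk.length_cons]; push_cast; ring

/-- Vertex-edge distance bound in the total graph. -/
lemma tg_edist_inl_inr (u : V) (e : G.edgeSet) :
    (totalGraph G).edist (Sum.inl u) (Sum.inr e) ≤ G.edist u (e : Sym2 V).out.1 + 1 := by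
  calc (totalGraph G).edist (Sum.inl u) (Sum.inr e)
      ≤ (totalGraph G).edist (Sum.inl u) (Sum.inl (e : Sym2 V).out.1)
        + (totalGraph G).edist (Sum.inl (e : Sym2 V).out.1) (Sum.inr e) :=
        SimpleGraph.edist_triangle
    _ ≤ G.edist u (e : Sym2 V).out.1 + 1 := by
        gcongr
        · exact tg_edist_inl_le u _
        · exact le_of_eq
            (SimpleGraph.edist_eq_one_iff_adj.mpr (tg_adj_inl_inr.mpr (Sym2.out_fst_mem _)))

/-- The extended diameter of the total graph is at most `ediam G + 1`. -/
lemma tg_ediam_le (hG : G.Connected) :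
    (totalGraph G).ediam ≤ G.ediam + 1 := by
  apply SimpleGraph.ediam_le_of_edist_le
  have bound : ∀ (x y : V ⊕ G.edgeSet), (totalGraph G).edist x y ≤ G.ediam + 1 := by
    rintro (u | e) (v | f)
    · exact ((tg_edist_inl_le u v).trans SimpleGraph.edist_le_ediam).trans le_self_add
    · exact (tg_edist_inl_inr u f).trans (by gcongr; exact SimpleGraph.edist_le_ediam)
    · rw [SimpleGraph.edist_comm]
      exact (tg_edist_inl_inr v e).trans (by gcongr; exact SimpleGraph.edist_le_ediam)
    · obtain ⟨p, hp⟩ :=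
        (hG (e : Sym2 V).out.1 (f : Sym2 V).out.1).exists_walk_length_eq_edist
      have := tg_edist_inr_inr p f e (Sym2.out_fst_mem _) (Sym2.out_fst_mem _)
      refine this.trans ?_
      rw [hp]
      gcongr
      exact SimpleGraph.edist_le_ediam
  exact bound

end TotalGraphAux

open scoped Classical

/-- For a connected graph `G` with an edge, `diam(G) ≤ diam(T(G)) ≤ diam(G) + 1`. -/
theorem totalGraph_diam {V : Type*} [Fintype V] [DecidableEq V]
    (G : SimpleGraph V) [DecidableRel G.Adj]
    (hG : G.Connected) (hne : G.edgeSet.Nonempty) :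
    G.diam ≤ (totalGraph G).diam ∧ (totalGraph G).diam ≤ G.diam + 1 := by
  have hV : Nonempty V := hG.nonempty
  have hTc : (totalGraph G).Connected := tg_connected hG
  -- `G.ediam ≠ ⊤`
  have hGne : G.ediam ≠ ⊤ := by
    obtain ⟨u, v, huv⟩ := SimpleGraph.exists_edist_eq_ediam_of_finite (G := G)
    rw [← huv]
    exact SimpleGraph.edist_ne_top_iff_reachable.mpr (hG u v)
  have hTne : (totalGraph G).ediam ≠ ⊤ := by
    obtain ⟨x, y, hxy⟩ :=
      SimpleGraph.exists_edist_eq_ediam_of_finite (G := totalGraph G)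
    rw [← hxy]
    exact SimpleGraph.edist_ne_top_iff_reachable.mpr (hTc x y)
  have h1 : G.ediam ≤ (totalGraph G).ediam := by
    obtain ⟨u, v, huv⟩ := SimpleGraph.exists_edist_eq_ediam_of_finite (G := G)
    rw [← huv]
    exact (tg_le_edist_inl hG u v).trans SimpleGraph.edist_le_ediam
  have h2 := tg_ediam_le hG
  constructor
  · exact ENat.toNat_le_toNat h1 hTne
  · obtain ⟨d, hd⟩ : ∃ d : ℕ, G.ediam = (d : ℕ∞) :=
      ⟨G.ediam.toNat, (ENat.coe_toNat hGne).symm⟩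
    have h2' : (totalGraph G).ediam ≤ ((d + 1 : ℕ) : ℕ∞) := by
      rw [hd] at h2; exact_mod_cast h2
    show (totalGraph G).ediam.toNat ≤ G.ediam.toNat + 1
    calc (totalGraph G).ediam.toNat ≤ ((d + 1 : ℕ) : ℕ∞).toNat :=
          ENat.toNat_le_toNat h2' (ENat.coe_ne_top (d + 1))
      _ = d + 1 := ENat.toNat_coe (d + 1)
      _ = G.ediam.toNat + 1 := by rw [hd]; simp
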